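/- If X is an n×n complex cross matrix, then its adjugate matrix adj(X) is also a cross matrix. -/
import Mathlib

/-- An `n × n` complex matrix is a *cross matrix* if its nonzero entries lie
only on the main diagonal and the anti-diagonal (0-based indices). -/
def IsCrossMatrix {n : ℕ} (X : Matrix (Fin n) (Fin n) ℂ) : Prop :=
  ∀ i j : Fin n, j ≠ i → (i : ℕ) + (j : ℕ) + 1 ≠ n → X i j = 0

/-- The adjugate of a cross matrix is again a cross matrix. -/
theorem crossMatrix_adjugate {n : ℕ}
    (X : Matrix (Fin n) (Fin n) ℂ) (hX : IsCrossMatrix X) :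
    IsCrossMatrix X.adjugate := by
  intro i j hji hsum
  rw [Matrix.adjugate_apply, Matrix.det_apply]
  apply Finset.sum_eq_zero
  intro σ _
  set M := X.updateRow j (Pi.single i 1) with hM
  suffices hprod : ∏ k : Fin n, M (σ k) k = 0 by rw [hprod, smul_zero]
  have hMne : ∀ r k : Fin n, r ≠ j → M r k = X r k := by
    intro r k hr
    simp [hM, Matrix.updateRow_apply, hr]
  have hMj : ∀ k : Fin n, k ≠ i → M j k = 0 := by
    intro k hk
    simp [hM, Matrix.updateRow_apply, Pi.single_apply, hk]
  by_cases hσi : σ i = j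
  · -- σ i = j; show a zero entry on column j or column rev j
    have hij : i ≠ j := fun h => hji h.symm
    have hσj_ne_j : σ j ≠ j := fun h => hij (σ.injective (hσi.trans h.symm))
    by_cases hZ : X (σ j) j = 0
    · exact Finset.prod_eq_zero (Finset.mem_univ j)
        ((hMne (σ j) j hσj_ne_j).trans hZ)
    · -- then σ j = rev j
      have hcross : ((σ j : ℕ)) + (j : ℕ) + 1 = n := by
        by_contra hc
        exact hZ (hX (σ j) j hσj_ne_j.symm hc)
      -- j ≠ rev j
      have hjrev : ((j : ℕ)) + (j : ℕ) + 1 ≠ n := by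
        intro h
        apply hσj_ne_j
        apply Fin.ext
        omega
      -- consider the column k := σ j (which equals rev j)
      set k := σ j with hk
      have hk_ne_i : k ≠ i := by
        intro h
        apply hsum
        rw [← h]
        exact hcross
      have hk_ne_j : k ≠ j := hσj_ne_j
      have hσk_ne_j : σ k ≠ j := by
        intro h
        exact hk_ne_i (σ.injective (h.trans hσi.symm))
      have hσk_ne_k : σ k ≠ k := by
        intro h
        exact hk_ne_j (σ.injective (h.trans hk))
      have hσk_sum : ((σ k : ℕ)) + (k : ℕ) + 1 ≠ n := by
        intro h
        apply hσk_ne_j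
        apply Fin.ext
        omega
      refine Finset.prod_eq_zero (Finset.mem_univ k) ?_
      rw [hMne (σ k) k hσk_ne_j]
      exact hX (σ k) k hσk_ne_k.symm hσk_sum
  · -- σ i ≠ j; then the column σ⁻¹ j gets the updated row, off position i: zero
    have hk : σ (σ.symm j) = j := σ.apply_symm_apply j
    have h1 : σ.symm j ≠ i := by
      intro h
      exact hσi (by rw [← h, hk])
    refine Finset.prod_eq_zero (Finset.mem_univ (σ.symm j)) ?_
    rw [hk]
    exact hMj _ h1
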